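/- For every integer m ≥ 5, the polynomial f(x) = (m-4)x⁴ - (m-1)x³ - x + 1 has exactly one real root in the open interval (0,1). -/

import Mathlib

theorem stmt1 (m : ℤ) (hm : 5 ≤ m)
    (f : ℝ → ℝ) (hf : ∀ x, f x = ((m : ℝ) - 4) * x ^ 4 - ((m : ℝ) - 1) * x ^ 3 - x + 1) :
    ∃! x : ℝ, x ∈ Set.Ioo (0 : ℝ) 1 ∧ f x = 0 := by
  have hM : (5:ℝ) ≤ (m:ℝ) := by exact_mod_cast hm
  have hfc : Continuous f := by
    have : f = fun x => ((m : ℝ) - 4) * x ^ 4 - ((m : ℝ) - 1) * x ^ 3 - x + 1 := funext hf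
    rw [this]; continuity
  have hf0 : f 0 = 1 := by rw [hf]; ring
  have hf1 : f 1 = -3 := by rw [hf]; ring
  -- existence
  have hmem : (0:ℝ) ∈ Set.Ioo (f 1) (f 0) := by rw [hf0, hf1]; norm_num
  obtain ⟨x, hx, hfx⟩ := intermediate_value_Ioo' (by norm_num : (0:ℝ) ≤ 1)
    hfc.continuousOn hmem
  -- the auxiliary function G = f / x^4 and its derivative D
  set G : ℝ → ℝ := fun y => ((m:ℝ)-4) - ((m:ℝ)-1)*y⁻¹ - y⁻¹^3 + y⁻¹^4 with hGdef
  set D : ℝ → ℝ := fun y => (0 - ((m:ℝ)-1)*(-(y^2)⁻¹) - (3:ℕ)*y⁻¹^2*(-(y^2)⁻¹))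
      + (4:ℕ)*y⁻¹^3*(-(y^2)⁻¹) with hDdef
  have hderiv : ∀ y : ℝ, y ≠ 0 → HasDerivAt G (D y) y := by
    intro y hy
    have h1 := hasDerivAt_inv hy
    have h2 := (((hasDerivAt_const y ((m:ℝ)-4)).sub (h1.const_mul ((m:ℝ)-1))).sub
      (h1.pow 3)).add (h1.pow 4)
    simpa [hGdef, hDdef, Pi.sub_def, Pi.add_def, Pi.pow_def] using h2
  have hGf : ∀ y : ℝ, y ≠ 0 → G y * y^4 = f y := by
    intro y hy
    rw [hf]; simp only [hGdef]
    field_simp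
  have hD5 : ∀ y : ℝ, y ≠ 0 → D y * y^5 = ((m:ℝ)-1)*y^3 + 3*y - 4 := by
    intro y hy
    simp only [hDdef]
    push_cast
    field_simp
    ring
  have hG1 : G 1 = -3 := by
    have := hGf 1 one_ne_zero
    rw [hf] at this; nlinarith [this]
  -- uniqueness core
  have key : ∀ a b : ℝ, a ∈ Set.Ioo (0:ℝ) 1 → b ∈ Set.Ioo (0:ℝ) 1 →
      f a = 0 → f b = 0 → a < b → False := by
    intro a b ha hb hfa hfb hab
    obtain ⟨ha0, ha1⟩ := ha
    obtain ⟨hb0, hb1⟩ := hb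
    have hGa : G a = 0 := by
      have h := hGf a (ne_of_gt ha0)
      rw [hfa] at h
      have : a^4 ≠ 0 := pow_ne_zero _ (ne_of_gt ha0)
      exact (mul_eq_zero.mp h).resolve_right this
    have hGb : G b = 0 := by
      have h := hGf b (ne_of_gt hb0)
      rw [hfb] at h
      have : b^4 ≠ 0 := pow_ne_zero _ (ne_of_gt hb0)
      exact (mul_eq_zero.mp h).resolve_right this
    -- MVT on [a,b]
    have hcont1 : ContinuousOn G (Set.Icc a b) := fun y hy =>
      ((hderiv y (ne_of_gt (lt_of_lt_of_le ha0 hy.1))).continuousAt).continuousWithinAt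
    have hdiff1 : ∀ y ∈ Set.Ioo a b, HasDerivAt G (D y) y := fun y hy =>
      hderiv y (ne_of_gt (lt_trans ha0 hy.1))
    obtain ⟨c, hc, hDc⟩ := exists_hasDerivAt_eq_slope G D hab hcont1 hdiff1
    rw [hGa, hGb] at hDc
    simp at hDc
    -- MVT on [b,1]
    have hcont2 : ContinuousOn G (Set.Icc b 1) := fun y hy =>
      ((hderiv y (ne_of_gt (lt_of_lt_of_le hb0 hy.1))).continuousAt).continuousWithinAt
    have hdiff2 : ∀ y ∈ Set.Ioo b 1, HasDerivAt G (D y) y := fun y hy =>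
      hderiv y (ne_of_gt (lt_trans hb0 hy.1))
    obtain ⟨d, hd, hDd⟩ := exists_hasDerivAt_eq_slope G D hb1 hcont2 hdiff2
    rw [hGb, hG1] at hDd
    have hDdneg : D d < 0 := by
      rw [hDd]
      apply div_neg_of_neg_of_pos <;> [norm_num; linarith]
    have hc0 : 0 < c := lt_trans ha0 hc.1
    have hcd : c < d := lt_trans hc.2 hd.1
    have hpc := hD5 c (ne_of_gt hc0)
    have hpd := hD5 d (ne_of_gt (lt_trans hc0 hcd))
    rw [hDc] at hpc
    have hd5pos : (0:ℝ) < d^5 := pow_pos (lt_trans hc0 hcd) 5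
    have hpdneg : ((m:ℝ)-1)*d^3 + 3*d - 4 < 0 := by
      rw [← hpd]; exact mul_neg_of_neg_of_pos hDdneg hd5pos
    nlinarith [pow_lt_pow_left₀ hcd (le_of_lt hc0) (by norm_num : (3:ℕ) ≠ 0), hpc, hpdneg]
  refine ⟨x, ⟨hx, hfx⟩, ?_⟩
  rintro y ⟨hy, hfy⟩
  rcases lt_trichotomy y x with h | h | h
  · exact absurd (key y x hy hx hfy hfx h) (fun c => c)
  · exact h
  · exact absurd (key x y hx hy hfx hfy h) (fun c => c)
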